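/- Let q^i : ℝ^d → ℝ^d be measurable and bounded for i = 1,…,N, let m = m¹ ⊗ ⋯ ⊗ m^N be a product probability measure on (ℝ^d)^N with finite second moments, and let f : (ℝ^d)^N → ℝ be C¹ and convex in each variable. Suppose ǎ = (ǎ^1,…,ǎ^N), with ǎ^i : ℝ^d → ℝ^d, satisfies the fixed-point relation ǎ^i(x) = -N q^i(x) - N ∫ ∂_i f(ǎ^i(x), (ǎ^j(y^j))_{j≠i}) ∏_{j≠i} m^j(dy^j) for all x ∈ ℝ^d. Then for all x, x̃ ∈ ℝ^d and each i, |ǎ^i(x) - ǎ^i(x̃)| ≤ N |q^i(x) - q^i(x̃)|. -/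

import Mathlib

open MeasureTheory
open scoped BigOperators

/-- Monotonicity of the gradient of a convex function. -/
lemma grad_mono {E : Type*} [NormedAddCommGroup E] [InnerProductSpace ℝ E] [CompleteSpace E]
    {g : E → ℝ} (hg : ConvexOn ℝ Set.univ g) {u v gu gv : E}
    (hu : HasGradientAt g gu u) (hv : HasGradientAt g gv v) :
    0 ≤ (inner ℝ (gu - gv) (u - v) : ℝ) := by
  rcases eq_or_ne u v with rfl | huv
  · simp
  -- consider φ t = g (v + t • (u - v))
  set L : ℝ →ᵃ[ℝ] E := AffineMap.lineMap v u with hL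
  have hφconv : ConvexOn ℝ Set.univ (g ∘ L) := by
    have := hg.comp_affineMap L
    simpa using this
  have hline : ∀ t : ℝ, HasDerivAt (fun s : ℝ => L s) (u - v) t := by
    intro t
    have h1 : HasDerivAt (fun s : ℝ => s • (u - v) + v) ((1 : ℝ) • (u - v)) t := by
      exact ((hasDerivAt_id t).smul_const (u - v)).add_const v
    simp only [one_smul] at h1
    have heq : (fun s : ℝ => L s) = fun s : ℝ => s • (u - v) + v := by
      funext s
      simp [hL, AffineMap.lineMap_apply]
    rw [heq]
    exact h1
  have hd0 : HasDerivAt (g ∘ L) (inner ℝ gv (u - v) : ℝ) 0 := by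
    have hf := (hasGradientAt_iff_hasFDerivAt.mp hv)
    have h0 : L (0 : ℝ) = v := by simp [hL]
    have hf' : HasFDerivAt g ((InnerProductSpace.toDual ℝ E) gv) (L 0) := by rw [h0]; exact hf
    have := hf'.comp_hasDerivAt (0 : ℝ) (hline 0)
    simpa using this
  have hd1 : HasDerivAt (g ∘ L) (inner ℝ gu (u - v) : ℝ) 1 := by
    have hf := (hasGradientAt_iff_hasFDerivAt.mp hu)
    have h1 : L (1 : ℝ) = u := by simp [hL]
    have hf' : HasFDerivAt g ((InnerProductSpace.toDual ℝ E) gu) (L 1) := by rw [h1]; exact hf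
    have := hf'.comp_hasDerivAt (1 : ℝ) (hline 1)
    simpa using this
  have h01 : (0 : ℝ) < 1 := one_pos
  have hle1 : (inner ℝ gv (u - v) : ℝ) ≤ slope (g ∘ L) 0 1 :=
    hφconv.le_slope_of_hasDerivAt (Set.mem_univ 0) (Set.mem_univ 1) h01 hd0
  have hle2 : slope (g ∘ L) 0 1 ≤ (inner ℝ gu (u - v) : ℝ) :=
    hφconv.slope_le_of_hasDerivAt (Set.mem_univ 0) (Set.mem_univ 1) h01 hd1
  have : (inner ℝ gv (u - v) : ℝ) ≤ inner ℝ gu (u - v) := hle1.trans hle2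
  rw [inner_sub_left]
  linarith

/-- Lipschitz estimate for a distributed control `ǎ` defined through a
mean-field fixed-point relation.  `f` is `C¹` and convex in each `ℝ^d`-block, with
block gradients `Df · i`; `m = m¹ ⊗ ⋯ ⊗ m^N` is a product probability measure with
finite second moments; and `ǎⁱ` satisfies
`ǎⁱ(x) = -N qⁱ(x) - N ∫ ∂ᵢ f(ǎⁱ(x), (ǎʲ(yʲ))_{j≠i}) m^{-i}(dy^{-i})`. -/
theorem stmt4 (N d : ℕ) (hN : 0 < N)
    (q : Fin N → EuclideanSpace ℝ (Fin d) → EuclideanSpace ℝ (Fin d))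
    (hqmeas : ∀ i, Measurable (q i)) (hqbdd : ∀ i, ∃ B, ∀ x, ‖q i x‖ ≤ B)
    (μ : Fin N → Measure (EuclideanSpace ℝ (Fin d)))
    (hprob : ∀ i, IsProbabilityMeasure (μ i))
    (hmom : ∀ i, Integrable (fun x : EuclideanSpace ℝ (Fin d) => ‖x‖ ^ 2) (μ i))
    (f : (Fin N → EuclideanSpace ℝ (Fin d)) → ℝ) (hf : ContDiff ℝ 1 f)
    (Df : (Fin N → EuclideanSpace ℝ (Fin d)) → Fin N → EuclideanSpace ℝ (Fin d))
    (hgrad : ∀ (a : Fin N → EuclideanSpace ℝ (Fin d)) (i : Fin N),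
      HasGradientAt (fun u => f (Function.update a i u)) (Df a i) (a i))
    (hconvi : ∀ (i : Fin N) (a : Fin N → EuclideanSpace ℝ (Fin d)),
      ConvexOn ℝ Set.univ (fun u => f (Function.update a i u)))
    (acheck : Fin N → EuclideanSpace ℝ (Fin d) → EuclideanSpace ℝ (Fin d))
    (hmeas : ∀ i, Measurable (acheck i))
    (hint : ∀ i x, Integrable (fun y : Fin N → EuclideanSpace ℝ (Fin d) =>
      Df (Function.update (fun j => acheck j (y j)) i (acheck i x)) i) (Measure.pi μ))
    (hfix : ∀ i x, acheck i x = -((N : ℝ) • q i x) - (N : ℝ) •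
      ∫ y, Df (Function.update (fun j => acheck j (y j)) i (acheck i x)) i ∂(Measure.pi μ))
    (x xt : EuclideanSpace ℝ (Fin d)) (i : Fin N) :
    ‖acheck i x - acheck i xt‖ ≤ (N : ℝ) * ‖q i x - q i xt‖ := by
  classical
  set Δ : EuclideanSpace ℝ (Fin d) := acheck i x - acheck i xt with hΔ
  rcases eq_or_ne Δ 0 with h0 | h0
  · rw [h0]
    simp only [norm_zero]
    positivity
  have key : ∀ (b : Fin N → EuclideanSpace ℝ (Fin d)) (u : EuclideanSpace ℝ (Fin d)),
      HasGradientAt (fun v => f (Function.update b i v))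
        (Df (Function.update b i u) i) u := by
    intro b u
    have h := hgrad (Function.update b i u) i
    have h1 : Function.update b i u i = u := Function.update_self i u b
    have h2 : (fun v => f (Function.update (Function.update b i u) i v)) =
        (fun v => f (Function.update b i v)) := by
      funext v
      rw [Function.update_idem]
    rw [h2, h1] at h
    exact h
  have hmono : ∀ y : Fin N → EuclideanSpace ℝ (Fin d),
      0 ≤ (inner ℝ (Df (Function.update (fun j => acheck j (y j)) i (acheck i x)) i -
        Df (Function.update (fun j => acheck j (y j)) i (acheck i xt)) i) Δ : ℝ) := by
    intro y
    exact grad_mono (hconvi i (fun j => acheck j (y j)))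
      (key (fun j => acheck j (y j)) (acheck i x))
      (key (fun j => acheck j (y j)) (acheck i xt))
  set Ix : EuclideanSpace ℝ (Fin d) :=
    ∫ y, Df (Function.update (fun j => acheck j (y j)) i (acheck i x)) i
      ∂(Measure.pi μ) with hIx
  set Ixt : EuclideanSpace ℝ (Fin d) :=
    ∫ y, Df (Function.update (fun j => acheck j (y j)) i (acheck i xt)) i
      ∂(Measure.pi μ) with hIxt
  have hintpos : 0 ≤ (inner ℝ (Ix - Ixt) Δ : ℝ) := by
    have hsub : Ix - Ixt = ∫ y, (Df (Function.update (fun j => acheck j (y j)) i (acheck i x)) i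
        - Df (Function.update (fun j => acheck j (y j)) i (acheck i xt)) i) ∂(Measure.pi μ) := by
      rw [hIx, hIxt, integral_sub (hint i x) (hint i xt)]
    have hswap : (inner ℝ (Ix - Ixt) Δ : ℝ) = ∫ y, (inner ℝ
        (Df (Function.update (fun j => acheck j (y j)) i (acheck i x)) i
        - Df (Function.update (fun j => acheck j (y j)) i (acheck i xt)) i) Δ : ℝ)
        ∂(Measure.pi μ) := by
      have hI : Integrable (fun y : Fin N → EuclideanSpace ℝ (Fin d) =>
          Df (Function.update (fun j => acheck j (y j)) i (acheck i x)) i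
          - Df (Function.update (fun j => acheck j (y j)) i (acheck i xt)) i) (Measure.pi μ) :=
        (hint i x).sub (hint i xt)
      rw [hsub, real_inner_comm, ← integral_inner hI Δ]
      exact integral_congr_ae (Filter.Eventually.of_forall fun y => real_inner_comm _ _)
    rw [hswap]
    exact integral_nonneg fun y => hmono y
  have hΔeq : Δ = -((N : ℝ) • (q i x - q i xt)) - (N : ℝ) • (Ix - Ixt) := by
    rw [hΔ]
    conv_lhs => rw [hfix i x, hfix i xt]
    rw [← hIx, ← hIxt]
    simp only [smul_sub]
    abel
  have hinner : (inner ℝ Δ Δ : ℝ) =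
      -((N : ℝ) * inner ℝ (q i x - q i xt) Δ) - (N : ℝ) * inner ℝ (Ix - Ixt) Δ := by
    nth_rewrite 1 [hΔeq]
    rw [inner_sub_left, inner_neg_left, real_inner_smul_left, real_inner_smul_left]
  have hNnn : (0 : ℝ) ≤ N := Nat.cast_nonneg N
  have hstep : ‖Δ‖ ^ 2 ≤ (N : ℝ) * ‖q i x - q i xt‖ * ‖Δ‖ := by
    have h1 : (inner ℝ Δ Δ : ℝ) = ‖Δ‖ ^ 2 := real_inner_self_eq_norm_sq Δ
    have habs : |(inner ℝ (q i x - q i xt) Δ : ℝ)| ≤ ‖q i x - q i xt‖ * ‖Δ‖ :=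
      abs_real_inner_le_norm _ _
    have h3 : (0 : ℝ) ≤ (N : ℝ) * inner ℝ (Ix - Ixt) Δ := mul_nonneg hNnn hintpos
    have := neg_abs_le (inner ℝ (q i x - q i xt) Δ : ℝ)
    nlinarith
  have hΔpos : 0 < ‖Δ‖ := norm_pos_iff.mpr h0
  nlinarith [hstep, hΔpos]
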